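/- For every N of the form 2^m − 1 and every d ≤ N divisible by log_2(N+1), there exists a matrix K ∈ F_2^{N×d} such that every set of ⌈2d/log_2(N+1)⌉ − 1 rows of K is linearly independent over F_2. -/

import Mathlib

open Matrix

/-- Auxiliary: if `n` distinct nonzero elements of a field have all power sums
`p_1, ..., p_n` equal to zero, then `n = 0`. -/
lemma aux_powersum {F : Type} [Field F] (n : ℕ) (y : Fin n → F)
    (hinj : Function.Injective y) (hy0 : ∀ i, y i ≠ 0)
    (hp : ∀ j, 1 ≤ j → j ≤ n → ∑ i, y i ^ j = 0) : n = 0 := by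
  by_contra hn
  have hnpos : 0 < n := Nat.pos_of_ne_zero hn
  set B : Matrix (Fin n) (Fin n) F :=
    Matrix.diagonal y * Matrix.vandermonde y with hB
  have hdet : IsUnit B.det := by
    rw [hB, Matrix.det_mul, Matrix.det_diagonal]
    apply IsUnit.mul
    · exact (Finset.prod_ne_zero_iff.mpr fun i _ => hy0 i).isUnit
    · exact (Matrix.det_vandermonde_ne_zero_iff.mpr hinj).isUnit
  have hinj' : Function.Injective (Bᵀ.mulVec) := by
    rw [Matrix.mulVec_injective_iff_isUnit, Matrix.isUnit_iff_isUnit_det,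
      Matrix.det_transpose]
    exact hdet
  have h1 : Bᵀ.mulVec (fun _ => (1 : F)) = Bᵀ.mulVec 0 := by
    rw [Matrix.mulVec_zero]
    funext i
    have : ∀ j, Bᵀ i j = y j ^ ((i : ℕ) + 1) := by
      intro j
      simp [hB, Matrix.transpose_apply, Matrix.mul_apply, Matrix.diagonal,
        Matrix.vandermonde, Finset.sum_ite_eq, pow_succ']
    simp only [Matrix.mulVec, dotProduct, mul_one, this]
    exact hp ((i : ℕ) + 1) (Nat.succ_le_succ (Nat.zero_le _)) (Nat.succ_le_of_lt i.2)
  have := congrFun (hinj' h1) ⟨0, hnpos⟩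
  exact one_ne_zero this

/-- Auxiliary BCH-type lemma: if a nonempty set `T` of at most `2k-1` distinct
nonzero elements of a field of characteristic 2 has all odd power sums
`p_1, p_3, ..., p_{2k-1}` zero, we get a contradiction. -/
lemma bch_aux {F : Type} [Field F] [CharP F 2] {ι : Type*} (k : ℕ)
    (X : ι → F) (hXinj : Function.Injective X) (hX0 : ∀ i, X i ≠ 0)
    (T : Finset ι) (hT : T.Nonempty) (hTcard : T.card ≤ 2 * k - 1)
    (h : ∀ t : Fin k, ∑ i ∈ T, X i ^ (2 * (t : ℕ) + 1) = 0) : False := by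
  have hcardpos : 1 ≤ T.card := Finset.card_pos.mpr hT
  have hk : 1 ≤ k := by omega
  -- all power sums p_j for 1 ≤ j ≤ 2k-1 vanish
  have hp : ∀ j, 1 ≤ j → j ≤ 2 * k - 1 → ∑ i ∈ T, X i ^ j = 0 := by
    intro j
    induction j using Nat.strong_induction_on with
    | _ j ih =>
      intro h1 h2
      rcases Nat.even_or_odd j with ⟨j', hj'⟩ | ⟨t, ht⟩
      · have hj : j = j' * 2 := by omega
        have hcalc : ∑ i ∈ T, X i ^ j = (∑ i ∈ T, X i ^ j') ^ 2 := by
          rw [CharTwo.sum_sq]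
          exact Finset.sum_congr rfl fun i _ => by rw [hj, pow_mul]
        rw [hcalc, ih j' (by omega) (by omega) (by omega)]
        exact zero_pow (by norm_num)
      · have htk : t < k := by omega
        have := h ⟨t, htk⟩
        simpa [ht, two_mul] using this
  -- enumerate T and apply the Vandermonde lemma
  set n := T.card with hn
  let e : Fin n ≃ T := T.equivFin.symm
  let y : Fin n → F := fun i => X ((e i : ι))
  have hyinj : Function.Injective y := by
    intro a b hab
    exact e.injective (Subtype.ext (hXinj hab))
  have hy0 : ∀ i, y i ≠ 0 := fun i => hX0 _
  have hyp : ∀ j, 1 ≤ j → j ≤ n → ∑ i, y i ^ j = 0 := by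
    intro j h1 h2
    have hsum : ∑ i : Fin n, y i ^ j = ∑ i ∈ T, X i ^ j := by
      rw [← Finset.sum_coe_sort T (fun i => X i ^ j)]
      exact Equiv.sum_comp e (fun i : T => X (i : ι) ^ j)
    rw [hsum]
    exact hp j h1 (le_trans h2 hTcard)
  have := aux_powersum n y hyinj hy0 hyp
  omega

/-- For `N = 2^m − 1` and `d ≤ N` divisible by `m = log₂(N+1)`,
there is a matrix `K ∈ F_2^{N×d}` such that every set of `⌈2d/m⌉ − 1 = 2d/m − 1`
rows of `K` is linearly independent over `F_2`. -/
theorem exists_binary_matrix_strong_linear_independence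
    (m N d : ℕ) (hm : 1 ≤ m) (hN : N = 2 ^ m - 1) (hd : d ≤ N) (hdiv : m ∣ d) :
    ∃ K : Matrix (Fin N) (Fin d) (ZMod 2),
      ∀ s : Finset (Fin N), s.card = 2 * d / m - 1 →
        LinearIndependent (ZMod 2) (fun i : s => K i) := by
  classical
  obtain ⟨k, hk⟩ := hdiv
  haveI : Fact (Nat.Prime 2) := ⟨Nat.prime_two⟩
  set F := GaloisField 2 m with hF
  haveI : Fintype F := Fintype.ofFinite F
  have hcardF : Fintype.card F = 2 ^ m := by
    have := GaloisField.card 2 m (by omega)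
    rwa [Nat.card_eq_fintype_card] at this
  have hcardU : Fintype.card Fˣ = N := by
    rw [Fintype.card_units, hcardF, hN]
  let u : Fin N ≃ Fˣ := (Fintype.equivFinOfCardEq hcardU).symm
  let X : Fin N → F := fun i => (u i : F)
  have hXinj : Function.Injective X := fun a b hab => u.injective (Units.ext hab)
  have hX0 : ∀ i, X i ≠ 0 := fun i => (u i).ne_zero
  -- the linear equivalence (Fin k → F) ≃ₗ (Fin d → ZMod 2)
  have hfr : Module.finrank (ZMod 2) (Fin k → F) = Module.finrank (ZMod 2) (Fin d → ZMod 2) := by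
    rw [Module.finrank_pi_fintype, Module.finrank_fintype_fun_eq_card, Fintype.card_fin]
    simp only [GaloisField.finrank 2 (show m ≠ 0 by omega), Finset.sum_const,
      Finset.card_univ, Fintype.card_fin, smul_eq_mul]
    rw [hk]
    exact (congrArg (k * ·) (GaloisField.finrank 2 (show m ≠ 0 by omega))).trans (Nat.mul_comm k m)
  let E : (Fin k → F) ≃ₗ[ZMod 2] (Fin d → ZMod 2) := LinearEquiv.ofFinrankEq _ _ hfr
  let r : Fin N → (Fin k → F) := fun i => fun t => X i ^ (2 * (t : ℕ) + 1)
  refine ⟨Matrix.of (fun i => E (r i)), ?_⟩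
  intro s hs
  have hsk : s.card = 2 * k - 1 := by
    rw [hs, hk, ← Nat.mul_assoc]
    rw [Nat.mul_comm 2 m, Nat.mul_assoc, Nat.mul_div_cancel_left _ (by omega : 0 < m)]
  -- key: any nonempty subset of size ≤ 2k-1 has nonzero row sum
  have key : ∀ T : Finset (Fin N), T.Nonempty → T.card ≤ 2 * k - 1 →
      ∑ i ∈ T, (Matrix.of (fun i => E (r i))) i ≠ 0 := by
    intro T hT hTc hsum
    have hr : ∑ i ∈ T, r i = 0 := by
      apply E.injective
      rw [map_sum, map_zero]
      exact hsum
    apply bch_aux k X hXinj hX0 T hT hTc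
    intro t
    have := congrFun hr t
    simpa [r, Finset.sum_apply] using this
  rw [Fintype.linearIndependent_iff]
  intro g hg
  by_contra hcon
  push_neg at hcon
  obtain ⟨i₀, hi₀⟩ := hcon
  -- the support of g as a subset of Fin N
  let T' : Finset s := Finset.univ.filter (fun i => g i ≠ 0)
  let T : Finset (Fin N) := T'.map ⟨Subtype.val, Subtype.val_injective⟩
  have hone : ∀ a : ZMod 2, a ≠ 0 → a = 1 := by
    intro a ha
    fin_cases a
    · exact absurd rfl ha
    · rfl
  have hsum : ∑ i ∈ T, (Matrix.of (fun i => E (r i))) i = 0 := by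
    refine (Finset.sum_map _ _ _).trans ?_
    simp only [Function.Embedding.coeFn_mk]
    have : ∀ i ∈ T', (Matrix.of (fun i => E (r i))) (i : Fin N)
        = g i • (Matrix.of (fun i => E (r i))) (i : Fin N) := by
      intro i hi
      have : g i ≠ 0 := (Finset.mem_filter.mp hi).2
      rw [hone _ this, one_smul]
    rw [Finset.sum_congr rfl this]
    rw [Finset.sum_filter_of_ne (fun i _ hne => by
      intro h0; apply hne; rw [h0, zero_smul])]
    exact hg
  have hTne : T.Nonempty := ⟨i₀, Finset.mem_map.mpr ⟨i₀, Finset.mem_filter.mpr ⟨Finset.mem_univ _, hi₀⟩, rfl⟩⟩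
  have hTc : T.card ≤ 2 * k - 1 := by
    rw [Finset.card_map]
    calc T'.card ≤ Fintype.card s := Finset.card_le_univ T'
      _ = s.card := Fintype.card_coe s
      _ = 2 * k - 1 := hsk
  exact key T hTne hTc hsum
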